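/- arXiv:2210.15423 — 5 statements merged into one kernel-verified Lean document; each statement's English description precedes it below -/
import Mathlib

section
/- Let d ≥ 1 and n ≥ d + 1. Suppose a_1, …, a_n ∈ ℝ^d affinely span ℝ^d and b_1, …, b_n ∈ ℝ^{n−d−1} form a Gale-dual pair with a_1, …, a_n. Suppose (I⁺, I⁻) are disjoint nonempty subsets of [n] forming a minimal Radon pair for a_1, …, a_n. Then there exists α ∈ ℝ^{n−d−1}, α ≠ 0, such that ⟪b_j, α⟫ > 0 for all j ∈ I⁺, ⟪b_j, α⟫ < 0 for all j ∈ I⁻, and ⟪b_j, α⟫ = 0 for all j ∉ I⁺ ∪ I⁻. -/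
open scoped BigOperators

/-- Extract index-based weights from convex hull membership of an image of a finite set. -/
lemma exists_index_weights {E : Type*} [AddCommGroup E] [Module ℝ E] {n : ℕ}
    (a : Fin n → E) (I : Finset (Fin n)) (x : E)
    (hx : x ∈ convexHull ℝ (a '' ↑I)) :
    ∃ l : Fin n → ℝ, (∀ j, 0 ≤ l j) ∧ (∀ j, j ∉ I → l j = 0) ∧
      (∑ j ∈ I, l j = 1) ∧ (∑ j ∈ I, l j • a j = x) := by
  classical
  rw [convexHull_eq] at hx
  obtain ⟨ι, t, w, z, hw0, hw1, hz, hxc⟩ := hx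
  -- I is nonempty
  have hI : I.Nonempty := by
    rcases t.eq_empty_or_nonempty with rfl | ⟨i, hi⟩
    · simp at hw1
    · obtain ⟨j, hj, -⟩ := hz i hi
      exact ⟨j, hj⟩
  obtain ⟨j₀, hj₀⟩ := hI
  set c : ι → Fin n := fun i => if h : ∃ j ∈ I, a j = z i then h.choose else j₀ with hc
  have hcI : ∀ i ∈ t, c i ∈ I := by
    intro i hi
    obtain ⟨j, hj, hji⟩ := hz i hi
    have h : ∃ j ∈ I, a j = z i := ⟨j, hj, hji⟩
    simp only [hc, dif_pos h]
    exact h.choose_spec.1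
  have hca : ∀ i ∈ t, a (c i) = z i := by
    intro i hi
    obtain ⟨j, hj, hji⟩ := hz i hi
    have h : ∃ j ∈ I, a j = z i := ⟨j, hj, hji⟩
    simp only [hc, dif_pos h]
    exact h.choose_spec.2
  refine ⟨fun j => ∑ i ∈ t.filter (fun i => c i = j), w i, ?_, ?_, ?_, ?_⟩
  · intro j
    exact Finset.sum_nonneg fun i hi => hw0 i (Finset.mem_filter.mp hi).1
  · intro j hj
    apply Finset.sum_eq_zero
    intro i hi
    rw [Finset.mem_filter] at hi
    exact absurd (hi.2 ▸ hcI i hi.1) hj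
  · rw [Finset.sum_fiberwise_of_maps_to hcI, hw1]
  · have key : ∀ j ∈ I, (∑ i ∈ t.filter (fun i => c i = j), w i) • a j
        = ∑ i ∈ t.filter (fun i => c i = j), w i • a (c i) := by
      intro j _
      rw [Finset.sum_smul]
      apply Finset.sum_congr rfl
      intro i hi
      rw [(Finset.mem_filter.mp hi).2]
    rw [Finset.sum_congr rfl key, Finset.sum_fiberwise_of_maps_to hcI]
    have : ∑ i ∈ t, w i • a (c i) = ∑ i ∈ t, w i • z i :=
      Finset.sum_congr rfl fun i hi => by rw [hca i hi]
    rw [this, ← Finset.centerMass_eq_of_sum_1 t z hw1, hxc]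

/-- If a weight vanishes at some index, the point lies in the hull of the erased set. -/
lemma mem_hull_erase {E : Type*} [AddCommGroup E] [Module ℝ E] {n : ℕ}
    (a : Fin n → E) (I : Finset (Fin n)) (x : E) (l : Fin n → ℝ)
    (hl0 : ∀ j, 0 ≤ l j) (hl1 : ∑ j ∈ I, l j = 1) (hlx : ∑ j ∈ I, l j • a j = x)
    {j₀ : Fin n} (hj₀ : j₀ ∈ I) (hz : l j₀ = 0) :
    x ∈ convexHull ℝ (a '' ↑(I.erase j₀)) := by
  classical
  have hsum : ∑ j ∈ I.erase j₀, l j = 1 := by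
    rw [← Finset.add_sum_erase I l hj₀] at hl1
    simpa [hz] using hl1
  have hx : (I.erase j₀).centerMass l a = x := by
    rw [Finset.centerMass_eq_of_sum_1 _ _ hsum]
    rw [← Finset.add_sum_erase I (fun j => l j • a j) hj₀] at hlx
    simpa [hz] using hlx
  rw [← hx]
  exact Finset.centerMass_mem_convexHull _ (fun i _ => hl0 i) (by rw [hsum]; norm_num)
    (fun i hi => Set.mem_image_of_mem a hi)

/-- **Gale duality, part (i).** If `(I⁺, I⁻)` is a minimal Radon pair for points
`a 1, …, a n` affinely spanning `ℝ^d` and `b` is a Gale dual of `a`, then there is a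
linear functional `⟪·, α⟫` strictly positive on `b '' I⁺`, strictly negative on `b '' I⁻`,
and vanishing on the remaining points. -/
theorem gale_radon_to_hyperplane (d n : ℕ) (hd : 1 ≤ d) (hn : d + 1 ≤ n)
    (a : Fin n → EuclideanSpace ℝ (Fin d))
    (b : Fin n → EuclideanSpace ℝ (Fin (n - d - 1)))
    (hspan : affineSpan ℝ (Set.range a) = ⊤)
    (hgale : ∀ t : Fin n → ℝ,
      ((∑ j, t j = 0) ∧ (∑ j, t j • a j) = 0) ↔
        ∃ α : EuclideanSpace ℝ (Fin (n - d - 1)), ∀ j, t j = (inner ℝ (b j) α : ℝ))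
    (Ip Im : Finset (Fin n)) (hIp : Ip.Nonempty) (hIm : Im.Nonempty)
    (hdisj : Disjoint Ip Im)
    (hradon : (convexHull ℝ (a '' ↑Ip) ∩ convexHull ℝ (a '' ↑Im)).Nonempty)
    (hminm : ∀ I' : Finset (Fin n), I' ⊂ Im →
      convexHull ℝ (a '' ↑Ip) ∩ convexHull ℝ (a '' ↑I') = ∅)
    (hminp : ∀ I' : Finset (Fin n), I' ⊂ Ip →
      convexHull ℝ (a '' ↑I') ∩ convexHull ℝ (a '' ↑Im) = ∅) :
    ∃ α : EuclideanSpace ℝ (Fin (n - d - 1)), α ≠ 0 ∧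
      (∀ j ∈ Ip, (inner ℝ (b j) α : ℝ) > 0) ∧
      (∀ j ∈ Im, (inner ℝ (b j) α : ℝ) < 0) ∧
      (∀ j, j ∉ Ip → j ∉ Im → (inner ℝ (b j) α : ℝ) = 0) := by
  classical
  obtain ⟨x, hxp, hxm⟩ := hradon
  obtain ⟨l, hl0, hlz, hl1, hlx⟩ := exists_index_weights a Ip x hxp
  obtain ⟨m, hm0, hmz, hm1, hmx⟩ := exists_index_weights a Im x hxm
  set t : Fin n → ℝ := fun j => l j - m j with ht
  have hluniv : ∑ j, l j = 1 := by
    rw [← Finset.sum_subset (Finset.subset_univ Ip) (fun j _ hj => hlz j hj), hl1]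
  have hmuniv : ∑ j, m j = 1 := by
    rw [← Finset.sum_subset (Finset.subset_univ Im) (fun j _ hj => hmz j hj), hm1]
  have hlxuniv : ∑ j, l j • a j = x := by
    rw [← Finset.sum_subset (Finset.subset_univ Ip)
      (fun j _ hj => by rw [hlz j hj, zero_smul]), hlx]
  have hmxuniv : ∑ j, m j • a j = x := by
    rw [← Finset.sum_subset (Finset.subset_univ Im)
      (fun j _ hj => by rw [hmz j hj, zero_smul]), hmx]
  have h1 : ∑ j, t j = 0 := by
    simp only [ht, Finset.sum_sub_distrib, hluniv, hmuniv, sub_self]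
  have h2 : ∑ j, t j • a j = 0 := by
    simp only [ht, sub_smul, Finset.sum_sub_distrib, hlxuniv, hmxuniv, sub_self]
  obtain ⟨α, hα⟩ := (hgale t).mp ⟨h1, h2⟩
  -- strict positivity of l on Ip
  have hlpos : ∀ j ∈ Ip, 0 < l j := by
    intro j hj
    rcases (hl0 j).lt_or_eq with h | h
    · exact h
    · exfalso
      have hxe := mem_hull_erase a Ip x l hl0 hl1 hlx hj h.symm
      have := hminp (Ip.erase j) (Finset.erase_ssubset hj)
      rw [Set.eq_empty_iff_forall_notMem] at this
      exact this x ⟨hxe, hxm⟩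
  have hmpos : ∀ j ∈ Im, 0 < m j := by
    intro j hj
    rcases (hm0 j).lt_or_eq with h | h
    · exact h
    · exfalso
      have hxe := mem_hull_erase a Im x m hm0 hm1 hmx hj h.symm
      have := hminm (Im.erase j) (Finset.erase_ssubset hj)
      rw [Set.eq_empty_iff_forall_notMem] at this
      exact this x ⟨hxp, hxe⟩
  have hpos : ∀ j ∈ Ip, (inner ℝ (b j) α : ℝ) > 0 := by
    intro j hj
    have hm0' : m j = 0 := hmz j (Finset.disjoint_left.mp hdisj hj)
    have := hα j
    rw [ht] at this
    simp only [hm0', sub_zero] at this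
    rw [← this]
    exact hlpos j hj
  have hneg : ∀ j ∈ Im, (inner ℝ (b j) α : ℝ) < 0 := by
    intro j hj
    have hl0' : l j = 0 := hlz j (Finset.disjoint_right.mp hdisj hj)
    have := hα j
    rw [ht] at this
    simp only [hl0', zero_sub] at this
    rw [← this]
    simpa using hmpos j hj
  refine ⟨α, ?_, hpos, hneg, ?_⟩
  · rintro rfl
    obtain ⟨j, hj⟩ := hIp
    have := hpos j hj
    rw [inner_zero_right] at this
    exact lt_irrefl 0 this
  · intro j hjp hjm
    have := hα j
    simp only [ht, hlz j hjp, hmz j hjm, sub_zero] at this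
    exact this.symm
end

section
/- Let d ≥ 1 and n ≥ d + 1. Let b_1, …, b_n ∈ ℝ^{n−d−1} be points that linearly span ℝ^{n−d−1} and satisfy ∑_{j=1}^n b_j = 0. Suppose there exist α ∈ ℝ^{n−d−1}, α ≠ 0, and nonempty disjoint subsets J⁺, J⁻ ⊆ [n] such that ⟪b_j, α⟫ > 0 for all j ∈ J⁺, ⟪b_j, α⟫ < 0 for all j ∈ J⁻, and ⟪b_j, α⟫ = 0 for all j ∉ J⁺ ∪ J⁻. Then there exist points a_1, …, a_n ∈ ℝ^d affinely spanning ℝ^d that form a Gale-dual pair with b_1, …, b_n, and nonempty subsets I⁺ ⊆ J⁺ and I⁻ ⊆ J⁻ such that (I⁺, I⁻) is a minimal Radon pair for a_1, …, a_n. -/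
open scoped BigOperators


lemma mem_orthogonal_span_iff {E : Type*} [NormedAddCommGroup E] [InnerProductSpace ℝ E]
    (S : Set E) (t : E) :
    t ∈ (Submodule.span ℝ S)ᗮ ↔ ∀ s ∈ S, (inner ℝ s t : ℝ) = 0 := by
  constructor
  · intro h s hs
    exact (Submodule.mem_orthogonal _ t).1 h s (Submodule.subset_span hs)
  · intro h
    rw [Submodule.mem_orthogonal]
    intro x hx
    induction hx using Submodule.span_induction with
    | mem s hs => exact h s hs
    | zero => simp
    | add x y _ _ hx hy => simp [inner_add_left, hx, hy]
    | smul c x _ hx => simp [inner_smul_left, hx]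


/-- **Gale duality, part (ii).** If points `b 1, …, b n` linearly span `ℝ^{n-d-1}`, sum to
zero, and are separated by a linear hyperplane `⟪·, α⟫ = 0` into parts indexed by `J⁺` and
`J⁻` (with all remaining points on the hyperplane), then there exist points
`a 1, …, a n` affinely spanning `ℝ^d`, Gale dual to `b`, together with nonempty subsets
`I⁺ ⊆ J⁺` and `I⁻ ⊆ J⁻` forming a minimal Radon pair for `a`. -/
theorem gale_hyperplane_to_radon (d n : ℕ) (hd : 1 ≤ d) (hn : d + 1 ≤ n)
    (b : Fin n → EuclideanSpace ℝ (Fin (n - d - 1)))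
    (hbspan : Submodule.span ℝ (Set.range b) = ⊤)
    (hbsum : (∑ j, b j) = 0)
    (α : EuclideanSpace ℝ (Fin (n - d - 1))) (hα : α ≠ 0)
    (Jp Jm : Finset (Fin n)) (hJp : Jp.Nonempty) (hJm : Jm.Nonempty)
    (hJdisj : Disjoint Jp Jm)
    (hp : ∀ j ∈ Jp, (inner ℝ (b j) α : ℝ) > 0)
    (hm : ∀ j ∈ Jm, (inner ℝ (b j) α : ℝ) < 0)
    (h0 : ∀ j, j ∉ Jp → j ∉ Jm → (inner ℝ (b j) α : ℝ) = 0) :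
    ∃ a : Fin n → EuclideanSpace ℝ (Fin d),
      affineSpan ℝ (Set.range a) = ⊤ ∧
      (∀ t : Fin n → ℝ,
        ((∑ j, t j = 0) ∧ (∑ j, t j • a j) = 0) ↔
          ∃ β : EuclideanSpace ℝ (Fin (n - d - 1)), ∀ j, t j = (inner ℝ (b j) β : ℝ)) ∧
      ∃ Ip ⊆ Jp, ∃ Im ⊆ Jm, Ip.Nonempty ∧ Im.Nonempty ∧ Disjoint Ip Im ∧
        (convexHull ℝ (a '' ↑Ip) ∩ convexHull ℝ (a '' ↑Im)).Nonempty ∧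
        (∀ I' : Finset (Fin n), I' ⊂ Im →
          convexHull ℝ (a '' ↑Ip) ∩ convexHull ℝ (a '' ↑I') = ∅) ∧
        (∀ I' : Finset (Fin n), I' ⊂ Ip →
          convexHull ℝ (a '' ↑I') ∩ convexHull ℝ (a '' ↑Im) = ∅) := by
  classical
  let B : EuclideanSpace ℝ (Fin (n-d-1)) →ₗ[ℝ] EuclideanSpace ℝ (Fin n) :=
    { toFun := fun β => WithLp.toLp 2 (fun j => (inner ℝ (b j) β : ℝ) : Fin n → ℝ)
      map_add' := by intro x y; ext j; simp [inner_add_right]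
      map_smul' := by intro c x; ext j; simp [inner_smul_right] }
  have hB : ∀ β j, B β j = (inner ℝ (b j) β : ℝ) := fun β j => rfl
  have hkerB : LinearMap.ker B = ⊥ := by
    rw [LinearMap.ker_eq_bot']
    intro β hβ
    have h1 : ∀ j, (inner ℝ (b j) β : ℝ) = 0 := by
      intro j
      have := congrFun (congrArg (fun (x : EuclideanSpace ℝ (Fin n)) => (x : Fin n → ℝ)) hβ) j
      simpa [hB] using this
    have h2 : β ∈ (Submodule.span ℝ (Set.range b))ᗮ := by
      rw [Submodule.mem_orthogonal]
      intro x hx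
      induction hx using Submodule.span_induction with
      | mem s hs => obtain ⟨j, rfl⟩ := hs; exact h1 j
      | zero => simp
      | add x y _ _ hx hy => simp [inner_add_left, hx, hy]
      | smul c x _ hx => simp [inner_smul_left, hx]
    rw [hbspan, Submodule.top_orthogonal_eq_bot] at h2
    simpa using h2
  set W := LinearMap.range B with hWdef
  have hWrank : Module.finrank ℝ W = n - d - 1 := by
    rw [LinearMap.finrank_range_of_inj (LinearMap.ker_eq_bot.mp hkerB)]
    simp
  set U := Wᗮ with hUdef
  have hUrank : Module.finrank ℝ U = d + 1 := by
    have h := Submodule.finrank_add_finrank_orthogonal (K := W)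
    rw [hWrank, finrank_euclideanSpace_fin] at h
    rw [hUdef]
    omega
  set e : EuclideanSpace ℝ (Fin n) := WithLp.toLp 2 (fun _ => 1 : Fin n → ℝ) with hedef
  have he0 : e ≠ 0 := by
    intro h
    have := congrFun (congrArg (fun (x : EuclideanSpace ℝ (Fin n)) => (x : Fin n → ℝ)) h)
      ⟨0, by omega⟩
    simp [hedef] at this
  have heU : e ∈ U := by
    rw [hUdef, Submodule.mem_orthogonal]
    rintro x ⟨β, rfl⟩
    have : (inner ℝ (B β) e : ℝ) = ∑ j, (inner ℝ (b j) β : ℝ) := by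
      rw [PiLp.inner_apply]
      refine Finset.sum_congr rfl fun j _ => ?_
      simp [hB, hedef, RCLike.inner_apply]
    rw [this]
    have : ∑ j, (inner ℝ (b j) β : ℝ) = (inner ℝ (∑ j, b j) β : ℝ) := by
      rw [sum_inner]
    rw [this, hbsum, inner_zero_left]
  set K1 : Submodule ℝ (EuclideanSpace ℝ (Fin n)) := ℝ ∙ e with hK1def
  have hK1U : K1 ≤ U := by
    rw [hK1def, Submodule.span_singleton_le_iff_mem]; exact heU
  set V := K1ᗮ ⊓ U with hVdef
  have hVU : V ≤ U := inf_le_right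
  have hVrank : Module.finrank ℝ V = d := by
    have h := Submodule.finrank_add_inf_finrank_orthogonal hK1U
    rw [finrank_span_singleton he0, hUrank] at h
    rw [hVdef]
    omega
  have hVK1 : K1 ⊓ V = ⊥ := by
    rw [hVdef, ← inf_assoc, Submodule.inf_orthogonal_eq_bot, bot_inf_eq]
  have hsup : K1 ⊔ V = U := by
    apply Submodule.eq_of_le_of_finrank_le (sup_le hK1U hVU)
    have h := Submodule.finrank_sup_add_finrank_inf_eq K1 V
    rw [hVK1, finrank_span_singleton he0, hVrank] at h
    simp only [finrank_bot, add_zero] at h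
    rw [hUrank, h]
    omega
  let v : Module.Basis (Fin d) ℝ V := Module.finBasisOfFinrankEq ℝ V hVrank
  let u : Fin d → EuclideanSpace ℝ (Fin n) := fun i => (v i : EuclideanSpace ℝ (Fin n))
  have huV : ∀ i, u i ∈ V := fun i => (v i).2
  have hVspan : Submodule.span ℝ (Set.range u) = V := by
    have h1 : Submodule.span ℝ (Set.range u) =
        Submodule.map V.subtype (Submodule.span ℝ (Set.range v)) := by
      rw [Submodule.map_span]
      congr 1
      rw [← Set.range_comp]
      rfl
    rw [h1, Module.Basis.span_eq, Submodule.map_subtype_top]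
  -- key characterization
  have hkey : ∀ t : EuclideanSpace ℝ (Fin n),
      ((inner ℝ e t : ℝ) = 0 ∧ ∀ i, (inner ℝ (u i) t : ℝ) = 0) ↔ t ∈ W := by
    intro t
    have h1 : t ∈ W ↔ t ∈ Uᗮ := by
      rw [hUdef, Submodule.orthogonal_orthogonal]
    rw [h1, ← hsup, ← Submodule.inf_orthogonal, Submodule.mem_inf]
    constructor
    · rintro ⟨h2, h3⟩
      constructor
      · rw [hK1def, Submodule.mem_orthogonal_singleton_iff_inner_right]
        exact h2
      · rw [← hVspan, mem_orthogonal_span_iff]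
        intro s hs
        obtain ⟨i, rfl⟩ := hs
        exact h3 i
    · rintro ⟨h2, h3⟩
      refine ⟨Submodule.mem_orthogonal_singleton_iff_inner_right.mp h2, ?_⟩
      intro i
      rw [← hVspan, mem_orthogonal_span_iff] at h3
      exact h3 (u i) (Set.mem_range_self i)
  let a : Fin n → EuclideanSpace ℝ (Fin d) := fun j => WithLp.toLp 2 (fun i => u i j : Fin d → ℝ)
  have ha : ∀ j i, a j i = u i j := fun j i => rfl
  have hsum_inner : ∀ t : Fin n → ℝ,
      (inner ℝ e (WithLp.toLp 2 t : EuclideanSpace ℝ (Fin n)) : ℝ) = ∑ j, t j := by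
    intro t
    rw [PiLp.inner_apply]
    refine Finset.sum_congr rfl fun j _ => ?_
    simp [hedef, RCLike.inner_apply]
  have hcomb_inner : ∀ (t : Fin n → ℝ) (i : Fin d),
      (inner ℝ (u i) (WithLp.toLp 2 t : EuclideanSpace ℝ (Fin n)) : ℝ) = (∑ j, t j • a j) i := by
    intro t i
    rw [PiLp.inner_apply, WithLp.ofLp_sum, Finset.sum_apply]
    refine Finset.sum_congr rfl fun j _ => ?_
    simp [RCLike.inner_apply, ha, PiLp.smul_apply, mul_comm]
  have hchar : ∀ t : Fin n → ℝ,
      ((∑ j, t j = 0) ∧ (∑ j, t j • a j) = 0) ↔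
        (WithLp.toLp 2 t : EuclideanSpace ℝ (Fin n)) ∈ W := by
    intro t
    rw [← hkey]
    constructor
    · rintro ⟨h1, h2⟩
      refine ⟨by rw [hsum_inner]; exact h1, fun i => ?_⟩
      rw [hcomb_inner, h2]
      rfl
    · rintro ⟨h1, h2⟩
      constructor
      · rw [← hsum_inner]; exact h1
      · ext i
        have := h2 i
        rw [hcomb_inner] at this
        rw [this]
        rfl
  have hmemW : ∀ t : Fin n → ℝ,
      ((WithLp.toLp 2 t : EuclideanSpace ℝ (Fin n)) ∈ W ↔
        ∃ β : EuclideanSpace ℝ (Fin (n-d-1)), ∀ j, t j = (inner ℝ (b j) β : ℝ)) := by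
    intro t
    rw [hWdef, LinearMap.mem_range]
    constructor
    · rintro ⟨β, hβ⟩
      refine ⟨β, fun j => ?_⟩
      have h3 : B β j = t j :=
        congrFun (congrArg (fun x : EuclideanSpace ℝ (Fin n) => (x : Fin n → ℝ)) hβ) j
      exact h3.symm
    · rintro ⟨β, hβ⟩
      refine ⟨β, ?_⟩
      ext j
      exact (hβ j).symm
  have hGale : ∀ t : Fin n → ℝ,
      ((∑ j, t j = 0) ∧ (∑ j, t j • a j) = 0) ↔
        ∃ β : EuclideanSpace ℝ (Fin (n-d-1)), ∀ j, t j = (inner ℝ (b j) β : ℝ) :=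
    fun t => (hchar t).trans (hmemW t)
  -- affine span
  let T : EuclideanSpace ℝ (Fin n) →ₗ[ℝ] ℝ × EuclideanSpace ℝ (Fin d) :=
    { toFun := fun t => (∑ j, t j, ∑ j, t j • a j)
      map_add' := by
        intro x y
        ext
        · simp [Finset.sum_add_distrib]
        · simp [add_smul, Finset.sum_add_distrib]
      map_smul' := by
        intro c x
        ext
        · simp [Finset.mul_sum]
        · simp [smul_smul, Finset.smul_sum] }
  have hkerT : LinearMap.ker T = W := by
    ext t
    rw [LinearMap.mem_ker]
    have : T t = (∑ j, t j, ∑ j, t j • a j) := rfl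
    rw [this, Prod.ext_iff]
    exact hchar t
  have hTsurj : LinearMap.range T = ⊤ := by
    apply Submodule.eq_top_of_finrank_eq
    have h := LinearMap.finrank_range_add_finrank_ker T
    rw [hkerT, hWrank, finrank_euclideanSpace_fin] at h
    rw [Module.finrank_prod, finrank_euclideanSpace_fin, Module.finrank_self]
    omega
  have haspan : affineSpan ℝ (Set.range a) = ⊤ := by
    rw [eq_top_iff]
    intro x _
    obtain ⟨t, ht⟩ := LinearMap.range_eq_top.mp hTsurj (1, x)
    have ht1 : ∑ j, t j = 1 := congrArg Prod.fst ht
    have ht2 : ∑ j, t j • a j = x := congrArg Prod.snd ht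
    have := affineCombination_mem_affineSpan (k := ℝ)
      (by rw [← ht1] : ∑ j ∈ Finset.univ, t j = 1) a
    rwa [Finset.univ.affineCombination_eq_linear_combination a t
      (by rw [← ht1]), ht2] at this
  -- Radon part (uses α, Jp, Jm)
  let t0 : Fin n → ℝ := fun j => (inner ℝ (b j) α : ℝ)
  obtain ⟨ht0sum, ht0comb⟩ := (hGale t0).mpr ⟨α, fun j => rfl⟩
  have hJpJm_comb : ∑ j ∈ Jp, t0 j • a j + ∑ j ∈ Jm, t0 j • a j = 0 := by
    have h1 : ∑ j ∈ Jp ∪ Jm, t0 j • a j = ∑ j, t0 j • a j := by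
      apply Finset.sum_subset (Finset.subset_univ _)
      intro j _ hj
      simp only [Finset.mem_union, not_or] at hj
      have : t0 j = 0 := h0 j hj.1 hj.2
      rw [this, zero_smul]
    rw [← Finset.sum_union hJdisj, h1, ht0comb]
  have hJpJm_sum : ∑ j ∈ Jp, t0 j + ∑ j ∈ Jm, t0 j = 0 := by
    have h1 : ∑ j ∈ Jp ∪ Jm, t0 j = ∑ j, t0 j := by
      apply Finset.sum_subset (Finset.subset_univ _)
      intro j _ hj
      simp only [Finset.mem_union, not_or] at hj
      exact h0 j hj.1 hj.2
    rw [← Finset.sum_union hJdisj, h1, ht0sum]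
  have hSpos : 0 < ∑ j ∈ Jp, t0 j := Finset.sum_pos (fun i hi => hp i hi) hJp
  have hbig : (convexHull ℝ (a '' ↑Jp) ∩ convexHull ℝ (a '' ↑Jm)).Nonempty := by
    refine ⟨Jp.centerMass t0 a, ?_, ?_⟩
    · exact Finset.centerMass_mem_convexHull _ (fun i hi => (hp i hi).le) hSpos
        (fun i hi => Set.mem_image_of_mem a (Finset.mem_coe.mpr hi))
    · have hms : ∑ j ∈ Jm, -t0 j = ∑ j ∈ Jp, t0 j := by
        rw [Finset.sum_neg_distrib]
        linarith
      have hmc : ∑ j ∈ Jm, (-t0 j) • a j = ∑ j ∈ Jp, t0 j • a j := by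
        have : ∑ j ∈ Jm, (-t0 j) • a j = -∑ j ∈ Jm, t0 j • a j := by
          rw [← Finset.sum_neg_distrib]
          refine Finset.sum_congr rfl fun j _ => ?_
          rw [neg_smul]
        rw [this, neg_eq_iff_add_eq_zero, add_comm]
        exact hJpJm_comb
      have hx : Jp.centerMass t0 a = Jm.centerMass (fun j => -t0 j) a := by
        simp only [Finset.centerMass]
        rw [hms, hmc]
      rw [hx]
      exact Finset.centerMass_mem_convexHull _ (fun i hi => by linarith [hm i hi])
        (by rw [hms]; exact hSpos)
        (fun i hi => Set.mem_image_of_mem a (Finset.mem_coe.mpr hi))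
  -- choose minimal pair
  let P : Finset (Fin n) × Finset (Fin n) → Prop := fun q =>
    q.1 ⊆ Jp ∧ q.2 ⊆ Jm ∧ q.1.Nonempty ∧ q.2.Nonempty ∧
      (convexHull ℝ (a '' ↑q.1) ∩ convexHull ℝ (a '' ↑q.2)).Nonempty
  have hPJ : P (Jp, Jm) := ⟨subset_rfl, subset_rfl, hJp, hJm, hbig⟩
  obtain ⟨q, hqmem, hqmin⟩ := Finset.exists_min_image
    (Finset.univ.filter P) (fun q => q.1.card + q.2.card)
    ⟨(Jp, Jm), by simp only [Finset.mem_filter]; exact ⟨Finset.mem_univ _, hPJ⟩⟩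
  rw [Finset.mem_filter] at hqmem
  obtain ⟨-, hq1, hq2, hq3, hq4, hq5⟩ := hqmem
  refine ⟨a, haspan, hGale, q.1, hq1, q.2, hq2, hq3, hq4,
    hJdisj.mono hq1 hq2, hq5, ?_, ?_⟩
  · intro I' hI'
    by_contra hne
    have hne' : (convexHull ℝ (a '' ↑q.1) ∩ convexHull ℝ (a '' ↑I')).Nonempty :=
      Set.nonempty_iff_ne_empty.mpr hne
    have hI'ne : I'.Nonempty := by
      rcases I'.eq_empty_or_nonempty with h | h
      · rw [h] at hne'
        simp at hne'
      · exact h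
    have hPq : P (q.1, I') := ⟨hq1, hI'.subset.trans hq2, hq3, hI'ne, hne'⟩
    have := hqmin (q.1, I') (by simp only [Finset.mem_filter]; exact ⟨Finset.mem_univ _, hPq⟩)
    have hcard := Finset.card_lt_card hI'
    simp only at this
    omega
  · intro I' hI'
    by_contra hne
    have hne' : (convexHull ℝ (a '' ↑I') ∩ convexHull ℝ (a '' ↑q.2)).Nonempty :=
      Set.nonempty_iff_ne_empty.mpr hne
    have hI'ne : I'.Nonempty := by
      rcases I'.eq_empty_or_nonempty with h | h
      · rw [h] at hne'
        simp at hne'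
      · exact h
    have hPq : P (I', q.2) := ⟨hI'.subset.trans hq1, hq2, hI'ne, hq4, hne'⟩
    have := hqmin (I', q.2) (by simp only [Finset.mem_filter]; exact ⟨Finset.mem_univ _, hPq⟩)
    have hcard := Finset.card_lt_card hI'
    simp only at this
    omega
end

section
/- Let c ≥ 1, k ≥ 1, and m ≥ 1 be integers. Suppose that for every d ≥ 1 and every n ≥ d + c + 2 the following holds: for any linear map f : Δ_{n−1} → ℝ^d and any family F of nonempty subsets of [n] with χ(KG^{2^k}(F)) ≤ m, there exist k minimal Radon pairs (σ_1⁺, σ_1⁻), …, (σ_k⁺, σ_k⁻) for f such that for every choice of signs ε ∈ {+,−}^k the intersection σ_1^{ε_1} ∩ ⋯ ∩ σ_k^{ε_k} contains no set from F. Then for any finite family F of polytopes in ℝ^{c+1} with χ(KG^{2^k}(F)) ≤ m, there exist k linear hyperplanes (hyperplanes through the origin) in ℝ^{c+1} whose union intersects every polytope of F. -/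
/-- The face `Δ_σ` of the standard simplex spanned by the vertices in `σ`. -/
def simplexFace {n : ℕ} (σ : Finset (Fin n)) : Set (Fin n → ℝ) :=
  {x | x ∈ stdSimplex ℝ (Fin n) ∧ ∀ i, i ∉ σ → x i = 0}

/-- `(σp, σm)` is a Radon pair for `f`: the faces are disjoint and their images intersect. -/
def IsRadonPair {n d : ℕ} (f : (Fin n → ℝ) → EuclideanSpace ℝ (Fin d))
    (σp σm : Finset (Fin n)) : Prop :=
  Disjoint σp σm ∧ (f '' simplexFace σp ∩ f '' simplexFace σm).Nonempty

/-- A minimal Radon pair: a Radon pair such that the image of neither face meets the image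
of any proper subface of the other. -/
def IsMinimalRadonPair {n d : ℕ} (f : (Fin n → ℝ) → EuclideanSpace ℝ (Fin d))
    (σp σm : Finset (Fin n)) : Prop :=
  IsRadonPair f σp σm ∧
    (∀ τ : Finset (Fin n), τ ⊂ σm → f '' simplexFace σp ∩ f '' simplexFace τ = ∅) ∧
    (∀ τ : Finset (Fin n), τ ⊂ σp → f '' simplexFace τ ∩ f '' simplexFace σm = ∅)

/-- `χ(KG^r(F)) ≤ m`: `F` can be colored with `m` colors so that no color class contains
`r` pairwise disjoint members. -/
def KneserChromaticLe {n : ℕ} (F : Finset (Finset (Fin n))) (r m : ℕ) : Prop :=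
  ∃ c : Finset (Fin n) → Fin m, ∀ G ⊆ F,
    (∀ A ∈ G, ∀ B ∈ G, A ≠ B → Disjoint A B) →
    (∀ A ∈ G, ∀ B ∈ G, c A = c B) → G.card < r

section RadonAux

open Finset
open scoped RealInnerProductSpace

attribute [local instance] Classical.propDecidable

namespace RadonRed

noncomputable section

abbrev Pt (c : ℕ) := EuclideanSpace ℝ (Fin (c + 1))

variable (c : ℕ) (F : Finset (Finset (Pt c)))

/-- sign-constancy of a linear functional on a convex set avoiding 0 -/
theorem sign_const {N : ℕ} {S : Set (EuclideanSpace ℝ (Fin N))} (hS : Convex ℝ S)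
    {a : EuclideanSpace ℝ (Fin N)} (h : ∀ z ∈ S, ⟪a, z⟫ ≠ 0) {x y : EuclideanSpace ℝ (Fin N)}
    (hx : x ∈ S) (hy : y ∈ S) (hpos : 0 < ⟪a, x⟫) : 0 < ⟪a, y⟫ := by
  by_contra hneg'
  have hyv : ⟪a, y⟫ < 0 := lt_of_le_of_ne (not_lt.mp hneg') (h y hy)
  set u := ⟪a, y⟫ with hu
  set v := ⟪a, x⟫ with hv
  have hvu : u - v < 0 := by linarith
  have hne0 : u - v ≠ 0 := ne_of_lt hvu
  set θ : ℝ := u / (u - v) with hθ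
  have hθ0 : 0 ≤ θ := le_of_lt (div_pos_of_neg_of_neg hyv hvu)
  have hθ1 : θ ≤ 1 := by
    have hd : θ - 1 = v / (u - v) := by rw [hθ]; field_simp; ring
    have : v / (u - v) < 0 := div_neg_of_pos_of_neg hpos hvu
    linarith
  have hw : θ • x + (1 - θ) • y ∈ S := hS hx hy hθ0 (by linarith) (by ring)
  have hval : ⟪a, θ • x + (1 - θ) • y⟫ = θ * v + (1 - θ) * u := by
    rw [inner_add_right, real_inner_smul_right, real_inner_smul_right]
  have hzero : θ * v + (1 - θ) * u = 0 := by
    rw [hθ]; field_simp; ring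
  exact h _ hw (by rw [hval, hzero])

def wit (P Q : Finset (Pt c)) : Pt c :=
  if h : ((convexHull ℝ (P : Set (Pt c))) ∩ convexHull ℝ (Q : Set (Pt c))).Nonempty then
    h.choose else 0

theorem wit_mem {P Q : Finset (Pt c)}
    (h : ((convexHull ℝ (P : Set (Pt c))) ∩ convexHull ℝ (Q : Set (Pt c))).Nonempty) :
    wit c P Q ∈ (convexHull ℝ (P : Set (Pt c))) ∩ convexHull ℝ (Q : Set (Pt c)) := by
  rw [wit, dif_pos h]; exact h.choose_spec

def extP (P : Finset (Pt c)) : Finset (Pt c) :=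
  P ∪ (F.filter fun Q : Finset (Pt c) =>
      ((convexHull ℝ (P : Set (Pt c))) ∩ convexHull ℝ (Q : Set (Pt c))).Nonempty).image (wit c P)
    ∪ (F.filter fun Q : Finset (Pt c) =>
      ((convexHull ℝ (Q : Set (Pt c))) ∩ convexHull ℝ (P : Set (Pt c))).Nonempty).image
        (fun Q => wit c Q P)

theorem subset_extP (P : Finset (Pt c)) : P ⊆ extP c F P := fun x hx =>
  Finset.mem_union_left _ (Finset.mem_union_left _ hx)

theorem extP_subset_hull (P : Finset (Pt c)) :
    (extP c F P : Set (Pt c)) ⊆ convexHull ℝ (P : Set (Pt c)) := by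
  intro x hx
  rw [Finset.mem_coe, extP] at hx
  rcases Finset.mem_union.mp hx with hx | hx
  · rcases Finset.mem_union.mp hx with hx | hx
    · exact subset_convexHull ℝ _ hx
    · obtain ⟨Q, hQ, rfl⟩ := Finset.mem_image.mp hx
      exact (wit_mem c (Finset.mem_filter.mp hQ).2).1
  · obtain ⟨Q, hQ, rfl⟩ := Finset.mem_image.mp hx
    exact (wit_mem c (Finset.mem_filter.mp hQ).2).2

theorem wit_mem_extP_left {P Q : Finset (Pt c)} (hQ : Q ∈ F)
    (h : ((convexHull ℝ (P : Set (Pt c))) ∩ convexHull ℝ (Q : Set (Pt c))).Nonempty) :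
    wit c P Q ∈ extP c F P :=
  Finset.mem_union_left _ (Finset.mem_union_right _
    (Finset.mem_image_of_mem _ (Finset.mem_filter.mpr ⟨hQ, h⟩)))

theorem wit_mem_extP_right {P Q : Finset (Pt c)} (hP : P ∈ F)
    (h : ((convexHull ℝ (P : Set (Pt c))) ∩ convexHull ℝ (Q : Set (Pt c))).Nonempty) :
    wit c P Q ∈ extP c F Q :=
  Finset.mem_union_right _
    (Finset.mem_image_of_mem _ (Finset.mem_filter.mpr ⟨hP, h⟩))

def bigE : Finset (Pt c) := F.sup (extP c F)

theorem extP_subset_bigE {P : Finset (Pt c)} (hP : P ∈ F) : extP c F P ⊆ bigE c F :=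
  fun x hx => Finset.mem_sup.mpr ⟨P, hP, hx⟩

def tE : ℕ := (bigE c F).card

def nE : ℕ := tE c F + (c + 1) + 1

def en : (bigE c F : Finset (Pt c)) ≃ Fin (tE c F) :=
  Fintype.equivFinOfCardEq (Fintype.card_coe _)

def idxFin (x : (bigE c F : Finset (Pt c))) : Fin (nE c F) :=
  ⟨(en c F x : ℕ), by
    have h1 : ((en c F x) : ℕ) < tE c F := (en c F x).isLt
    show ((en c F x) : ℕ) < tE c F + (c + 1) + 1
    omega⟩

def pfun (i : Fin (nE c F)) : Pt c :=
  if h : (i : ℕ) < tE c F then ((en c F).symm ⟨(i : ℕ), h⟩ : (bigE c F : Finset (Pt c)))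
  else if h2 : (i : ℕ) < tE c F + (c + 1) then
    EuclideanSpace.single ⟨(i : ℕ) - tE c F, by omega⟩ 1
  else 0

theorem pfun_idxFin (x : (bigE c F : Finset (Pt c))) : pfun c F (idxFin c F x) = x := by
  have h : ((idxFin c F x : Fin (nE c F)) : ℕ) < tE c F := (en c F x).isLt
  rw [pfun, dif_pos h]
  have h2 : (⟨((idxFin c F x : Fin (nE c F)) : ℕ), h⟩ : Fin (tE c F)) = en c F x := by
    apply Fin.ext; rfl
  rw [h2, Equiv.symm_apply_apply]

def idxS (S : Finset (Pt c)) : Finset (Fin (nE c F)) :=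
  ((bigE c F).attach.filter (fun x : {x // x ∈ bigE c F} => (x : Pt c) ∈ S)).image (idxFin c F)

theorem mem_idxS {S : Finset (Pt c)} {i : Fin (nE c F)} :
    i ∈ idxS c F S ↔ ∃ x : (bigE c F : Finset (Pt c)), (x : Pt c) ∈ S ∧ idxFin c F x = i := by
  simp only [idxS, Finset.mem_image, Finset.mem_filter, Finset.mem_attach, true_and]

def Phi : (Pt c × ℝ) →ₗ[ℝ] (Fin (nE c F) → ℝ) where
  toFun w := fun i => ⟪w.1, pfun c F i⟫ + (if (i : ℕ) = nE c F - 1 then w.2 else 0)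
  map_add' u v := by
    funext i
    simp only [Prod.fst_add, Prod.snd_add, inner_add_left, Pi.add_apply]
    split <;> ring
  map_smul' r u := by
    funext i
    simp only [Prod.smul_fst, Prod.smul_snd, real_inner_smul_left, RingHom.id_apply,
      Pi.smul_apply, smul_eq_mul]
    split <;> ring

@[simp] theorem Phi_apply (w : Pt c × ℝ) (i : Fin (nE c F)) :
    Phi c F w i = ⟪w.1, pfun c F i⟫ + (if (i : ℕ) = nE c F - 1 then w.2 else 0) := rfl

def KK : Submodule ℝ (Fin (nE c F) → ℝ) := LinearMap.range (Phi c F)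

theorem Phi_inj : Function.Injective (Phi c F) := by
  rw [← LinearMap.ker_eq_bot, LinearMap.ker_eq_bot']
  rintro ⟨a, s⟩ h
  have h' : ∀ i : Fin (nE c F),
      ⟪a, pfun c F i⟫ + (if (i : ℕ) = nE c F - 1 then s else 0) = 0 := by
    intro i
    have := congrFun h i
    simpa using this
  have hnE : nE c F = tE c F + (c + 1) + 1 := rfl
  have ha : a = 0 := by
    ext b
    have hb := b.isLt
    have hblt : tE c F + (b : ℕ) < nE c F := by omega
    have hh := h' ⟨tE c F + (b : ℕ), hblt⟩
    have hp : pfun c F ⟨tE c F + (b : ℕ), hblt⟩ = EuclideanSpace.single b 1 := by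
      rw [pfun, dif_neg (show ¬ tE c F + (b : ℕ) < tE c F by omega),
        dif_pos (show tE c F + (b : ℕ) < tE c F + (c + 1) by omega)]
      exact congrArg (fun t : Fin (c + 1) => (EuclideanSpace.single t 1 : Pt c))
        (Fin.ext (show tE c F + (b : ℕ) - tE c F = (b : ℕ) by omega))
    rw [hp, if_neg (show ¬ tE c F + (b : ℕ) = nE c F - 1 by omega)] at hh
    have : ⟪a, EuclideanSpace.single b 1⟫ = a b := by
      rw [EuclideanSpace.inner_single_right]
      simp
    rw [this] at hh
    simpa using hh
  have hs : s = 0 := by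
    have hblt : tE c F + (c + 1) < nE c F := by omega
    have hh := h' ⟨tE c F + (c + 1), hblt⟩
    have hp : pfun c F ⟨tE c F + (c + 1), hblt⟩ = 0 := by
      rw [pfun, dif_neg (show ¬ tE c F + (c + 1) < tE c F by omega),
        dif_neg (show ¬ tE c F + (c + 1) < tE c F + (c + 1) by omega)]
    rw [hp, if_pos (show tE c F + (c + 1) = nE c F - 1 by omega)] at hh
    simpa using hh
  simp [ha, hs, Prod.ext_iff]

theorem finrank_KK : Module.finrank ℝ (KK c F) = c + 2 := by
  rw [KK, LinearMap.finrank_range_of_inj (Phi_inj c F)]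
  rw [Module.finrank_prod, finrank_euclideanSpace, Fintype.card_fin, Module.finrank_self]

theorem finrank_quot :
    Module.finrank ℝ ((Fin (nE c F) → ℝ) ⧸ KK c F) = tE c F := by
  have h := Submodule.finrank_quotient_add_finrank (KK c F)
  rw [finrank_KK, Module.finrank_fin_fun] at h
  have hnE : nE c F = tE c F + (c + 1) + 1 := rfl
  omega

def gmap : (Fin (nE c F) → ℝ) →ₗ[ℝ] EuclideanSpace ℝ (Fin (tE c F)) :=
  (LinearEquiv.ofFinrankEq _ _
    (by rw [finrank_quot, finrank_euclideanSpace, Fintype.card_fin])).toLinearMap ∘ₗ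
    (KK c F).mkQ

theorem gmap_eq_zero_iff (z : Fin (nE c F) → ℝ) : gmap c F z = 0 ↔ z ∈ KK c F := by
  rw [gmap, LinearMap.comp_apply, LinearEquiv.coe_coe, LinearEquiv.map_eq_zero_iff,
    Submodule.mkQ_apply, Submodule.Quotient.mk_eq_zero]

def rep (A : Finset (Fin (nE c F))) : Finset (Pt c) :=
  if h : ∃ P, P ∈ F ∧ idxS c F (extP c F P) = A then h.choose else ∅

theorem rep_spec {A : Finset (Fin (nE c F))}
    (h : ∃ P, P ∈ F ∧ idxS c F (extP c F P) = A) :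
    rep c F A ∈ F ∧ idxS c F (extP c F (rep c F A)) = A := by
  rw [rep, dif_pos h]; exact h.choose_spec

end

end RadonRed

end RadonAux


open scoped RealInnerProductSpace

/-- **Radon pairs imply linear hyperplane transversals.** Suppose that for all `d ≥ 1` and
`n ≥ d + c + 2`, every linear (affine) map `f : Δ_{n-1} → ℝ^d` and every family `F` of
nonempty subsets of `[n]` with `χ(KG^(2^k)(F)) ≤ m` admit `k` minimal Radon pairs none of
whose sign-intersections contains a member of `F`. Then every finite family of polytopes in
`ℝ^{c+1}` with `χ(KG^(2^k)(F)) ≤ m` is pierced by `k` linear hyperplanes. -/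
theorem radon_pairs_to_linear_transversal (c k m : ℕ) (hc : 1 ≤ c) (hk : 1 ≤ k)
    (hm : 1 ≤ m)
    (hyp : ∀ d : ℕ, 1 ≤ d → ∀ n : ℕ, d + c + 2 ≤ n →
      ∀ f : (Fin n → ℝ) →ᵃ[ℝ] EuclideanSpace ℝ (Fin d),
      ∀ F : Finset (Finset (Fin n)), (∀ A ∈ F, A.Nonempty) →
        KneserChromaticLe F (2 ^ k) m →
        ∃ σp σm : Fin k → Finset (Fin n),
          (∀ j, IsMinimalRadonPair (⇑f) (σp j) (σm j)) ∧
          ∀ ε : Fin k → Bool, ∀ A ∈ F,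
            ¬A ⊆ Finset.univ.inf (fun j => if ε j then σp j else σm j))
    (F : Finset (Finset (EuclideanSpace ℝ (Fin (c + 1)))))
    (hne : ∀ P ∈ F, P.Nonempty)
    (hχ : ∃ cc : Finset (EuclideanSpace ℝ (Fin (c + 1))) → Fin m, ∀ G ⊆ F,
      (∀ P ∈ G, ∀ Q ∈ G, P ≠ Q →
        Disjoint (convexHull ℝ (P : Set (EuclideanSpace ℝ (Fin (c + 1)))))
          (convexHull ℝ (Q : Set (EuclideanSpace ℝ (Fin (c + 1)))))) →
      (∀ P ∈ G, ∀ Q ∈ G, cc P = cc Q) → G.card < 2 ^ k) :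
    ∃ a : Fin k → EuclideanSpace ℝ (Fin (c + 1)),
      (∀ j, a j ≠ 0) ∧
      ∀ P ∈ F, ∃ x ∈ convexHull ℝ (P : Set (EuclideanSpace ℝ (Fin (c + 1)))),
        ∃ j : Fin k, (inner ℝ (a j) x : ℝ) = 0 := by
  classical
  obtain ⟨cc, hcc⟩ := hχ
  rcases F.eq_empty_or_nonempty with rfl | hFne
  · refine ⟨fun _ => EuclideanSpace.single 0 1, fun j h => ?_,
      fun P hP => absurd hP (Finset.notMem_empty P)⟩
    simpa [EuclideanSpace.single_apply] using congrArg (fun v : EuclideanSpace ℝ (Fin (c + 1)) => v 0) h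
  obtain ⟨P₀, hP₀⟩ := hFne
  obtain ⟨x₀', hx₀'⟩ := hne P₀ hP₀
  have hx₀E : x₀' ∈ RadonRed.bigE c F :=
    RadonRed.extP_subset_bigE c F hP₀ (RadonRed.subset_extP c F P₀ hx₀')
  have ht1 : 1 ≤ RadonRed.tE c F := Finset.card_pos.mpr ⟨x₀', hx₀E⟩
  have hnE : RadonRed.nE c F = RadonRed.tE c F + (c + 1) + 1 := rfl
  set F'' : Finset (Finset (Fin (RadonRed.nE c F))) :=
    F.image (fun P => RadonRed.idxS c F (RadonRed.extP c F P)) with hF''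
  have hmemF'' : ∀ P ∈ F, RadonRed.idxS c F (RadonRed.extP c F P) ∈ F'' := fun P hP =>
    Finset.mem_image_of_mem _ hP
  have hrep : ∀ A ∈ F'', RadonRed.rep c F A ∈ F ∧
      RadonRed.idxS c F (RadonRed.extP c F (RadonRed.rep c F A)) = A := by
    intro A hA
    rw [hF'', Finset.mem_image] at hA
    exact RadonRed.rep_spec c F hA
  have hne'' : ∀ A ∈ F'', A.Nonempty := by
    intro A hA
    obtain ⟨hAF, hAid⟩ := hrep A hA
    obtain ⟨x, hx⟩ := hne _ hAF
    have hxe := RadonRed.subset_extP c F _ hx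
    have hxE := RadonRed.extP_subset_bigE c F hAF hxe
    rw [← hAid]
    exact ⟨_, (RadonRed.mem_idxS c F).mpr ⟨⟨x, hxE⟩, hxe, rfl⟩⟩
  have hKG : KneserChromaticLe F'' (2 ^ k) m := by
    refine ⟨fun A => cc (RadonRed.rep c F A), ?_⟩
    intro G hG hdis hmon
    have hinj : Set.InjOn (RadonRed.rep c F) ↑G := by
      intro A hA B hB hAB
      rw [← (hrep A (hG hA)).2, ← (hrep B (hG hB)).2, hAB]
    rw [← Finset.card_image_of_injOn hinj]
    apply hcc (G.image (RadonRed.rep c F))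
    · intro P hP
      obtain ⟨A, hA, rfl⟩ := Finset.mem_image.mp hP
      exact (hrep A (hG hA)).1
    · intro P hP Q hQ hPQ
      obtain ⟨A, hA, rfl⟩ := Finset.mem_image.mp hP
      obtain ⟨B, hB, rfl⟩ := Finset.mem_image.mp hQ
      have hAB : A ≠ B := fun h => hPQ (by rw [h])
      have hd := hdis A hA B hB hAB
      by_contra hnd
      rw [Set.not_disjoint_iff_nonempty_inter] at hnd
      have hwl := RadonRed.wit_mem_extP_left c F (hrep B (hG hB)).1 hnd
      have hwr := RadonRed.wit_mem_extP_right c F (hrep A (hG hA)).1 hnd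
      have hwE : RadonRed.wit c (RadonRed.rep c F A) (RadonRed.rep c F B) ∈ RadonRed.bigE c F :=
        RadonRed.extP_subset_bigE c F (hrep A (hG hA)).1 hwl
      have hiA : RadonRed.idxFin c F ⟨_, hwE⟩ ∈ A := by
        have h6 := (RadonRed.mem_idxS c F (S := RadonRed.extP c F (RadonRed.rep c F A))).mpr
          ⟨⟨_, hwE⟩, hwl, rfl⟩
        rwa [(hrep A (hG hA)).2] at h6
      have hiB : RadonRed.idxFin c F ⟨_, hwE⟩ ∈ B := by
        have h6 := (RadonRed.mem_idxS c F (S := RadonRed.extP c F (RadonRed.rep c F B))).mpr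
          ⟨⟨_, hwE⟩, hwr, rfl⟩
        rwa [(hrep B (hG hB)).2] at h6
      exact Finset.disjoint_left.mp hd hiA hiB
    · intro P hP Q hQ
      obtain ⟨A, hA, rfl⟩ := Finset.mem_image.mp hP
      obtain ⟨B, hB, rfl⟩ := Finset.mem_image.mp hQ
      exact hmon A hA B hB
  obtain ⟨σp, σm, hmin, hcov⟩ := hyp (RadonRed.tE c F) ht1 (RadonRed.nE c F) (by omega)
    ((RadonRed.gmap c F).toAffineMap) F'' hne'' hKG
  have key : ∀ j : Fin k, ∃ a : EuclideanSpace ℝ (Fin (c + 1)), a ≠ 0 ∧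
      ∀ i : Fin (RadonRed.nE c F), (i : ℕ) < RadonRed.tE c F →
        (0 < ⟪a, RadonRed.pfun c F i⟫ → i ∈ σp j) ∧
        (⟪a, RadonRed.pfun c F i⟫ < 0 → i ∈ σm j) := by
    intro j
    obtain ⟨⟨hdisjσ, hyne⟩, -, -⟩ := hmin j
    obtain ⟨y, hy1, hy2⟩ := hyne
    obtain ⟨lam, hlam, hly⟩ := hy1
    obtain ⟨mu, hmu, hmy⟩ := hy2
    have hg : RadonRed.gmap c F (lam - mu) = 0 := by
      have h1 : RadonRed.gmap c F lam = RadonRed.gmap c F mu := by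
        have h2 := hly.trans hmy.symm
        simpa [LinearMap.coe_toAffineMap] using h2
      rw [map_sub, h1, sub_self]
    obtain ⟨w, hw⟩ := (RadonRed.gmap_eq_zero_iff c F _).mp hg
    have hz : ∀ i : Fin (RadonRed.nE c F), lam i - mu i =
        ⟪w.1, RadonRed.pfun c F i⟫ + (if (i : ℕ) = RadonRed.nE c F - 1 then w.2 else 0) := by
      intro i
      have := congrFun hw i
      simpa using this.symm
    obtain ⟨⟨hlpos, hlsum⟩, hlsupp⟩ := hlam
    obtain ⟨⟨hmpos, hmsum⟩, hmsupp⟩ := hmu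
    refine ⟨w.1, ?_, ?_⟩
    · intro hW0
      have hzi : ∀ i : Fin (RadonRed.nE c F), (i : ℕ) ≠ RadonRed.nE c F - 1 → lam i = mu i := by
        intro i hi
        have h3 := hz i
        rw [hW0, if_neg hi] at h3
        have h4 : lam i - mu i = 0 := by simpa using h3
        linarith
      have hlz : ∀ i : Fin (RadonRed.nE c F), (i : ℕ) ≠ RadonRed.nE c F - 1 → lam i = 0 := by
        intro i hi
        by_contra h0
        have hiσp : i ∈ σp j := by
          by_contra hns; exact h0 (hlsupp i hns)
        have hiσm : i ∈ σm j := by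
          by_contra hns
          have h5 := hmsupp i hns
          rw [← hzi i hi] at h5
          exact h0 h5
        exact Finset.disjoint_left.mp hdisjσ hiσp hiσm
      have hmz : ∀ i : Fin (RadonRed.nE c F), (i : ℕ) ≠ RadonRed.nE c F - 1 → mu i = 0 := by
        intro i hi
        rw [← hzi i hi]
        exact hlz i hi
      have hlast : RadonRed.tE c F + (c + 1) < RadonRed.nE c F := by omega
      set ilast : Fin (RadonRed.nE c F) := ⟨RadonRed.tE c F + (c + 1), hlast⟩ with hil
      have hlv : (ilast : ℕ) = RadonRed.nE c F - 1 := by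
        show RadonRed.tE c F + (c + 1) = RadonRed.nE c F - 1
        omega
      have hval_ne : ∀ b : Fin (RadonRed.nE c F), b ≠ ilast → (b : ℕ) ≠ RadonRed.nE c F - 1 := by
        intro b hb hbv
        exact hb (Fin.ext (by rw [hbv, ← hlv]))
      have hl1 : lam ilast = 1 := by
        rw [← hlsum]
        exact (Finset.sum_eq_single ilast (fun b _ hb => hlz b (hval_ne b hb))
          (fun h => absurd (Finset.mem_univ _) h)).symm
      have hm1 : mu ilast = 1 := by
        rw [← hmsum]
        exact (Finset.sum_eq_single ilast (fun b _ hb => hmz b (hval_ne b hb))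
          (fun h => absurd (Finset.mem_univ _) h)).symm
      have hilp : ilast ∈ σp j := by
        by_contra hns
        rw [hlsupp ilast hns] at hl1
        norm_num at hl1
      have hilm : ilast ∈ σm j := by
        by_contra hns
        rw [hmsupp ilast hns] at hm1
        norm_num at hm1
      exact Finset.disjoint_left.mp hdisjσ hilp hilm
    · intro i hit
      have hine : (i : ℕ) ≠ RadonRed.nE c F - 1 := by omega
      have hzi : lam i - mu i = ⟪w.1, RadonRed.pfun c F i⟫ := by
        rw [hz i, if_neg hine, add_zero]
      constructor
      · intro hpos
        have h1 : 0 < lam i - mu i := by rw [hzi]; exact hpos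
        have h2 : 0 < lam i := by linarith [hmpos i]
        by_contra hns
        rw [hlsupp i hns] at h2
        exact lt_irrefl 0 h2
      · intro hneg
        have h1 : lam i - mu i < 0 := by rw [hzi]; exact hneg
        have h2 : 0 < mu i := by linarith [hlpos i]
        by_contra hns
        rw [hmsupp i hns] at h2
        exact lt_irrefl 0 h2
  choose a ha0 hasign using key
  refine ⟨a, ha0, ?_⟩
  intro P hP
  by_contra hcon
  push_neg at hcon
  obtain ⟨xP, hxP⟩ := hne P hP
  have hxPc : xP ∈ convexHull ℝ (P : Set (EuclideanSpace ℝ (Fin (c + 1)))) :=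
    subset_convexHull ℝ _ hxP
  refine hcov (fun j => decide (0 < ⟪a j, xP⟫)) _ (hmemF'' P hP) ?_
  have hsub : ∀ j : Fin k, RadonRed.idxS c F (RadonRed.extP c F P) ⊆
      (if decide (0 < ⟪a j, xP⟫) then σp j else σm j) := by
    intro j i hi
    obtain ⟨x, hxExt, rfl⟩ := (RadonRed.mem_idxS c F).mp hi
    have hpi := RadonRed.pfun_idxFin c F x
    have hxconv : (x : EuclideanSpace ℝ (Fin (c + 1))) ∈
        convexHull ℝ (P : Set (EuclideanSpace ℝ (Fin (c + 1)))) :=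
      RadonRed.extP_subset_hull c F P hxExt
    have hlt : ((RadonRed.idxFin c F x : Fin (RadonRed.nE c F)) : ℕ) < RadonRed.tE c F :=
      (RadonRed.en c F x).isLt
    have hconv : Convex ℝ (convexHull ℝ (P : Set (EuclideanSpace ℝ (Fin (c + 1))))) :=
      convex_convexHull ℝ _
    have hno : ∀ z ∈ convexHull ℝ (P : Set (EuclideanSpace ℝ (Fin (c + 1)))),
        ⟪a j, z⟫ ≠ 0 := fun z hz => hcon z hz j
    by_cases hj : 0 < ⟪a j, xP⟫
    · have hε : decide (0 < ⟪a j, xP⟫) = true := decide_eq_true hj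
      rw [hε, if_pos rfl]
      exact (hasign j _ hlt).1 (by rw [hpi]; exact RadonRed.sign_const hconv hno hxPc hxconv hj)
    · have hne0 := hcon xP hxPc j
      have hε : decide (0 < ⟪a j, xP⟫) = false := decide_eq_false hj
      rw [hε, if_neg (by simp)]
      apply (hasign j _ hlt).2
      rw [hpi]
      by_contra hge
      have h0 : ⟪a j, (x : EuclideanSpace ℝ (Fin (c + 1)))⟫ ≠ 0 := hcon _ hxconv j
      have hposx : 0 < ⟪a j, (x : EuclideanSpace ℝ (Fin (c + 1)))⟫ :=
        lt_of_le_of_ne (not_lt.mp hge) (Ne.symm h0)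
      exact hj (RadonRed.sign_const hconv hno hxconv hxPc hposx)
  exact Finset.le_inf fun j _ => hsub j
end

section
/- Let c ≥ 1, k ≥ 1, and m ≥ 1 be integers. Suppose that for any finite family G of polytopes in ℝ^{c+1} with χ(KG^{2^k}(G)) ≤ m there exist k linear hyperplanes (hyperplanes through the origin) in ℝ^{c+1} whose union intersects every polytope of G. Then for every d ≥ 1, every n ≥ d + c + 2, every linear map f : Δ_{n−1} → ℝ^d, and every family F of nonempty subsets of [n] with χ(KG^{2^k}(F)) ≤ m, there exist k minimal Radon pairs (σ_1⁺, σ_1⁻), …, (σ_k⁺, σ_k⁻) for f such that for every choice of signs ε ∈ {+,−}^k the intersection σ_1^{ε_1} ∩ ⋯ ∩ σ_k^{ε_k} contains no set from F. -/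
lemma exists_minimal_radon_aux {n d : ℕ} (f : (Fin n → ℝ) → EuclideanSpace ℝ (Fin d)) :
    ∀ N (σp σm : Finset (Fin n)), σp.card + σm.card ≤ N → IsRadonPair f σp σm →
    ∃ τp τm, τp ⊆ σp ∧ τm ⊆ σm ∧ IsMinimalRadonPair f τp τm := by
  intro N
  induction N with
  | zero =>
    intro σp σm hcard h
    exact ⟨σp, σm, subset_rfl, subset_rfl, h, by
      intro τ hτ
      exact absurd (Finset.card_lt_card hτ) (by omega), by
      intro τ hτ
      exact absurd (Finset.card_lt_card hτ) (by omega)⟩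
  | succ N ih =>
    intro σp σm hcard h
    by_cases h1 : ∀ τ : Finset (Fin n), τ ⊂ σm → f '' simplexFace σp ∩ f '' simplexFace τ = ∅
    · by_cases h2 : ∀ τ : Finset (Fin n), τ ⊂ σp →
          f '' simplexFace τ ∩ f '' simplexFace σm = ∅
      · exact ⟨σp, σm, subset_rfl, subset_rfl, h, h1, h2⟩
      · push_neg at h2
        obtain ⟨τ, hτ, hne⟩ := h2
        have hr : IsRadonPair f τ σm :=
          ⟨h.1.mono_left hτ.subset, hne⟩
        have hlt := Finset.card_lt_card hτ
        obtain ⟨τp, τm, h1', h2', h3'⟩ := ih τ σm (by omega) hr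
        exact ⟨τp, τm, h1'.trans hτ.subset, h2', h3'⟩
    · push_neg at h1
      obtain ⟨τ, hτ, hne⟩ := h1
      have hr : IsRadonPair f σp τ :=
        ⟨h.1.mono_right hτ.subset, hne⟩
      have hlt := Finset.card_lt_card hτ
      obtain ⟨τp, τm, h1', h2', h3'⟩ := ih σp τ (by omega) hr
      exact ⟨τp, τm, h1', h2'.trans hτ.subset, h3'⟩

lemma exists_minimal_radon {n d : ℕ} (f : (Fin n → ℝ) → EuclideanSpace ℝ (Fin d))
    (σp σm : Finset (Fin n)) (h : IsRadonPair f σp σm) :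
    ∃ τp τm, τp ⊆ σp ∧ τm ⊆ σm ∧ IsMinimalRadonPair f τp τm :=
  exists_minimal_radon_aux f (σp.card + σm.card) σp σm le_rfl h

lemma radon_of_kernel {n d : ℕ} (f : (Fin n → ℝ) →ᵃ[ℝ] EuclideanSpace ℝ (Fin d))
    (t : Fin n → ℝ) (ht : t ≠ 0) (hsum : ∑ i, t i = 0) (hlin : f.linear t = 0) :
    IsRadonPair (⇑f) (Finset.univ.filter (fun i => 0 < t i))
      (Finset.univ.filter (fun i => t i < 0)) := by
  classical
  have hdisj : Disjoint (Finset.univ.filter (fun i => 0 < t i))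
      (Finset.univ.filter (fun i => t i < 0)) := by
    rw [Finset.disjoint_left]
    intro i hi hi'
    simp only [Finset.mem_filter] at hi hi'
    linarith [hi.2, hi'.2]
  -- there is a positive entry
  have hpos : ∃ i, 0 < t i := by
    by_contra hcon
    push_neg at hcon
    apply ht
    funext i
    exact (Finset.sum_eq_zero_iff_of_nonpos (fun j _ => hcon j)).1 hsum i (Finset.mem_univ i)
  obtain ⟨i0, hi0⟩ := hpos
  set s : ℝ := ∑ i ∈ Finset.univ.filter (fun i => 0 < t i), t i with hs
  have hspos : 0 < s := by
    apply Finset.sum_pos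
    · intro i hi; exact (Finset.mem_filter.1 hi).2
    · exact ⟨i0, Finset.mem_filter.2 ⟨Finset.mem_univ i0, hi0⟩⟩
  have hsumpos : ∑ i, max (t i) 0 = s := by
    rw [hs, ← Finset.sum_filter_add_sum_filter_not Finset.univ (fun i => 0 < t i)
      (fun i => max (t i) 0)]
    rw [Finset.sum_congr rfl (fun i hi => max_eq_left (le_of_lt (Finset.mem_filter.1 hi).2)),
      Finset.sum_congr rfl (g := fun _ => (0:ℝ))
        (fun i hi => max_eq_right (not_lt.1 (Finset.mem_filter.1 hi).2))]
    simp
  have hsumneg : ∑ i, max (-t i) 0 = s := by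
    have : ∀ i, max (-t i) 0 = max (t i) 0 - t i := by
      intro i
      rcases le_or_gt (t i) 0 with h | h
      · rw [max_eq_left (by linarith), max_eq_right h]; ring
      · rw [max_eq_right (by linarith), max_eq_left (le_of_lt h)]; ring
    simp_rw [this]
    rw [Finset.sum_sub_distrib, hsum, hsumpos, sub_zero]
  set xp : Fin n → ℝ := fun i => max (t i) 0 / s with hxp
  set xm : Fin n → ℝ := fun i => max (-t i) 0 / s with hxm
  have hxpmem : xp ∈ simplexFace (Finset.univ.filter (fun i => 0 < t i)) := by
    refine ⟨⟨fun i => div_nonneg (le_max_right _ _) hspos.le, ?_⟩, ?_⟩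
    · rw [← Finset.sum_div, hsumpos, div_self hspos.ne']
    · intro i hi
      simp only [Finset.mem_filter, Finset.mem_univ, true_and, not_lt] at hi
      simp [hxp, max_eq_right hi]
  have hxmmem : xm ∈ simplexFace (Finset.univ.filter (fun i => t i < 0)) := by
    refine ⟨⟨fun i => div_nonneg (le_max_right _ _) hspos.le, ?_⟩, ?_⟩
    · rw [← Finset.sum_div, hsumneg, div_self hspos.ne']
    · intro i hi
      simp only [Finset.mem_filter, Finset.mem_univ, true_and, not_lt] at hi
      simp [hxm, max_eq_right (by linarith : -t i ≤ 0)]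
  have hdiff : xp - xm = s⁻¹ • t := by
    funext i
    simp only [Pi.sub_apply, Pi.smul_apply, smul_eq_mul, hxp, hxm]
    rcases le_or_gt (t i) 0 with h | h
    · rw [max_eq_right h, max_eq_left (by linarith)]
      field_simp
      ring
    · rw [max_eq_left (le_of_lt h), max_eq_right (by linarith)]
      field_simp
      ring
  have hfeq : f xp = f xm := by
    have h1 : f.linear xp = f.linear xm := by
      have := congrArg (f.linear) hdiff
      rw [map_sub, map_smul, hlin, smul_zero] at this
      exact sub_eq_zero.mp this
    rw [AffineMap.decomp f]
    simp [h1]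
  exact ⟨hdisj, ⟨f xp, ⟨xp, hxpmem, rfl⟩, ⟨xm, hxmmem, hfeq.symm⟩⟩⟩

/-- **Linear hyperplane transversals imply Radon pairs.** Suppose every finite family of
polytopes in `ℝ^{c+1}` with `χ(KG^(2^k)) ≤ m` is pierced by `k` linear hyperplanes. Then for
all `d ≥ 1`, `n ≥ d + c + 2`, every linear (affine) map `f : Δ_{n-1} → ℝ^d` and every
family `F` of nonempty subsets of `[n]` with `χ(KG^(2^k)(F)) ≤ m` admit `k` minimal Radon
pairs none of whose sign-intersections contains a member of `F`. -/
theorem linear_transversal_to_radon_pairs (c k m : ℕ) (hc : 1 ≤ c) (hk : 1 ≤ k)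
    (hm : 1 ≤ m)
    (hyp : ∀ G : Finset (Finset (EuclideanSpace ℝ (Fin (c + 1)))),
      (∀ P ∈ G, P.Nonempty) →
      (∃ cc : Finset (EuclideanSpace ℝ (Fin (c + 1))) → Fin m, ∀ G' ⊆ G,
        (∀ P ∈ G', ∀ Q ∈ G', P ≠ Q →
          Disjoint (convexHull ℝ (P : Set (EuclideanSpace ℝ (Fin (c + 1)))))
            (convexHull ℝ (Q : Set (EuclideanSpace ℝ (Fin (c + 1)))))) →
        (∀ P ∈ G', ∀ Q ∈ G', cc P = cc Q) → G'.card < 2 ^ k) →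
      ∃ a : Fin k → EuclideanSpace ℝ (Fin (c + 1)),
        (∀ j, a j ≠ 0) ∧
        ∀ P ∈ G, ∃ x ∈ convexHull ℝ (P : Set (EuclideanSpace ℝ (Fin (c + 1)))),
          ∃ j : Fin k, (inner ℝ (a j) x : ℝ) = 0)
    (d : ℕ) (hd : 1 ≤ d) (n : ℕ) (hn : d + c + 2 ≤ n)
    (f : (Fin n → ℝ) →ᵃ[ℝ] EuclideanSpace ℝ (Fin d))
    (F : Finset (Finset (Fin n))) (hne : ∀ A ∈ F, A.Nonempty)
    (hχ : KneserChromaticLe F (2 ^ k) m) :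
    ∃ σp σm : Fin k → Finset (Fin n),
      (∀ j, IsMinimalRadonPair (⇑f) (σp j) (σm j)) ∧
      ∀ ε : Fin k → Bool, ∀ A ∈ F,
        ¬A ⊆ Finset.univ.inf (fun j => if ε j then σp j else σm j) := by
  classical
  -- the linear "lift" map
  set S : (Fin n → ℝ) →ₗ[ℝ] ℝ := ∑ i : Fin n, LinearMap.proj i with hS
  have hSapp : ∀ x : Fin n → ℝ, S x = ∑ i, x i := by
    intro x; simp [hS, LinearMap.sum_apply]
  set V : (Fin n → ℝ) →ₗ[ℝ] (EuclideanSpace ℝ (Fin d) × ℝ) := f.linear.prod S with hV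
  -- the kernel has dimension at least c+1
  have hker : c + 1 ≤ Module.finrank ℝ (LinearMap.ker V) := by
    have h1 := LinearMap.finrank_range_add_finrank_ker V
    have h2 : Module.finrank ℝ (LinearMap.range V) ≤ d + 1 := by
      have := Submodule.finrank_le (LinearMap.range V)
      simpa [Module.finrank_prod, finrank_euclideanSpace_fin] using this
    rw [Module.finrank_fin_fun] at h1
    omega
  obtain ⟨w0, hw0⟩ := exists_linearIndependent_of_le_finrank hker
  set w : Fin (c + 1) → (Fin n → ℝ) := fun j => (w0 j : Fin n → ℝ) with hw
  have hwli : LinearIndependent ℝ w :=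
    hw0.map' (LinearMap.ker V).subtype (Submodule.ker_subtype _)
  have hwker : ∀ j, V (w j) = 0 := fun j => (w0 j).2
  -- the points p i
  set p : Fin n → EuclideanSpace ℝ (Fin (c + 1)) := fun i => WithLp.toLp 2 (fun j => w j i) with hp
  -- for a vector a, the corresponding kernel element
  set t : EuclideanSpace ℝ (Fin (c + 1)) → (Fin n → ℝ) :=
    fun a => ∑ j, a j • w j with htdef
  have htker : ∀ a, V (t a) = 0 := by
    intro a
    rw [htdef]
    simp only [map_sum, map_smul]
    simp [hwker]
  have htinner : ∀ a i, t a i = (inner ℝ a (p i) : ℝ) := by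
    intro a i
    rw [htdef, PiLp.inner_apply]
    simp [hp, Finset.sum_apply, mul_comm]
  have htne : ∀ a : EuclideanSpace ℝ (Fin (c + 1)), a ≠ 0 → t a ≠ 0 := by
    intro a ha hta
    apply ha
    have := linearIndependent_iff'.1 hwli Finset.univ (fun j => a j) (by simpa [htdef] using hta)
    ext j
    simpa using this j (Finset.mem_univ j)
  -- build the family of polytopes
  obtain ⟨col, hcol⟩ := hχ
  set G : Finset (Finset (EuclideanSpace ℝ (Fin (c + 1)))) :=
    F.image (fun A => A.image p) with hG
  have hGne : ∀ P ∈ G, P.Nonempty := by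
    intro P hP
    obtain ⟨A, hA, rfl⟩ := Finset.mem_image.1 hP
    exact (hne A hA).image p
  -- representative map
  set rep : Finset (EuclideanSpace ℝ (Fin (c + 1))) → Finset (Fin n) :=
    fun P => if h : ∃ A ∈ F, A.image p = P then h.choose else ∅ with hrep
  have hrep1 : ∀ P ∈ G, rep P ∈ F ∧ (rep P).image p = P := by
    intro P hP
    obtain ⟨A, hA, hAP⟩ := Finset.mem_image.1 hP
    have h : ∃ A ∈ F, A.image p = P := ⟨A, hA, hAP⟩
    rw [hrep]
    simp only [dif_pos h]
    exact ⟨h.choose_spec.1, h.choose_spec.2⟩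
  -- the coloring hypothesis for G
  have hGcol : ∃ cc : Finset (EuclideanSpace ℝ (Fin (c + 1))) → Fin m, ∀ G' ⊆ G,
      (∀ P ∈ G', ∀ Q ∈ G', P ≠ Q →
        Disjoint (convexHull ℝ (P : Set (EuclideanSpace ℝ (Fin (c + 1)))))
          (convexHull ℝ (Q : Set (EuclideanSpace ℝ (Fin (c + 1)))))) →
      (∀ P ∈ G', ∀ Q ∈ G', cc P = cc Q) → G'.card < 2 ^ k := by
    refine ⟨fun P => col (rep P), ?_⟩
    intro G' hG' hdisj hmono
    set G'' : Finset (Finset (Fin n)) := G'.image rep with hG''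
    have hinj : Set.InjOn rep ↑G' := by
      intro P hP Q hQ hPQ
      have h1 := hrep1 P (hG' hP)
      have h2 := hrep1 Q (hG' hQ)
      rw [← h1.2, ← h2.2, hPQ]
    have hcard : G''.card = G'.card := Finset.card_image_of_injOn hinj
    have hsub : G'' ⊆ F := by
      intro A hA
      obtain ⟨P, hP, rfl⟩ := Finset.mem_image.1 hA
      exact (hrep1 P (hG' hP)).1
    have hd2 : ∀ A ∈ G'', ∀ B ∈ G'', A ≠ B → Disjoint A B := by
      intro A hA B hB hAB
      obtain ⟨P, hP, rfl⟩ := Finset.mem_image.1 hA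
      obtain ⟨Q, hQ, rfl⟩ := Finset.mem_image.1 hB
      have hPQ : P ≠ Q := fun h => hAB (by rw [h])
      have hdisjPQ := hdisj P hP Q hQ hPQ
      rw [Finset.disjoint_left]
      intro i hi hi'
      have h1 : p i ∈ (P : Set (EuclideanSpace ℝ (Fin (c + 1)))) := by
        rw [← (hrep1 P (hG' hP)).2]
        exact_mod_cast Finset.mem_image_of_mem p hi
      have h2 : p i ∈ (Q : Set (EuclideanSpace ℝ (Fin (c + 1)))) := by
        rw [← (hrep1 Q (hG' hQ)).2]
        exact_mod_cast Finset.mem_image_of_mem p hi'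
      exact Set.disjoint_left.1 hdisjPQ (subset_convexHull ℝ _ h1) (subset_convexHull ℝ _ h2)
    have hm2 : ∀ A ∈ G'', ∀ B ∈ G'', col A = col B := by
      intro A hA B hB
      obtain ⟨P, hP, rfl⟩ := Finset.mem_image.1 hA
      obtain ⟨Q, hQ, rfl⟩ := Finset.mem_image.1 hB
      exact hmono P hP Q hQ
    have := hcol G'' hsub hd2 hm2
    omega
  -- apply the hyperplane transversal hypothesis
  obtain ⟨a, ha0, ha⟩ := hyp G hGne hGcol
  -- big Radon pairs from the kernel vectors
  have hradon : ∀ j : Fin k, IsRadonPair (⇑f)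
      (Finset.univ.filter (fun i => 0 < t (a j) i))
      (Finset.univ.filter (fun i => t (a j) i < 0)) := by
    intro j
    apply radon_of_kernel
    · exact htne (a j) (ha0 j)
    · have := htker (a j)
      have h2 := congrArg Prod.snd this
      simpa [hV, LinearMap.prod_apply, hSapp] using h2
    · have := htker (a j)
      have h2 := congrArg Prod.fst this
      simpa [hV, LinearMap.prod_apply] using h2
  have hmins : ∀ j : Fin k, ∃ τp τm,
      τp ⊆ Finset.univ.filter (fun i => 0 < t (a j) i) ∧
      τm ⊆ Finset.univ.filter (fun i => t (a j) i < 0) ∧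
      IsMinimalRadonPair (⇑f) τp τm := by
    intro j
    exact exists_minimal_radon (⇑f) _ _ (hradon j)
  choose σp σm hsub1 hsub2 hmin using hmins
  refine ⟨σp, σm, hmin, ?_⟩
  intro ε A hA hAsub
  -- get the piercing point for the polytope of A
  have hPA : A.image p ∈ G := Finset.mem_image_of_mem _ hA
  obtain ⟨x, hx, j, hj⟩ := ha (A.image p) hPA
  -- A is contained in the j-th chosen set
  have hAj : A ⊆ (if ε j then σp j else σm j) :=
    hAsub.trans (Finset.inf_le (Finset.mem_univ j))
  -- inner product with a j is linear
  have hlin : IsLinearMap ℝ (fun y : EuclideanSpace ℝ (Fin (c + 1)) => (inner ℝ (a j) y : ℝ)) :=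
    ⟨fun u v => inner_add_right _ _ _, fun r u => real_inner_smul_right _ _ _⟩
  cases hε : ε j with
  | true =>
    rw [hε] at hAj
    simp only [if_true] at hAj
    have hsubset : (↑(A.image p) : Set (EuclideanSpace ℝ (Fin (c + 1)))) ⊆
        {y | 0 < (inner ℝ (a j) y : ℝ)} := by
      intro y hy
      obtain ⟨i, hi, rfl⟩ := Finset.mem_image.1 (by exact_mod_cast hy)
      have := hsub1 j (hAj hi)
      have hpos := (Finset.mem_filter.1 this).2
      rw [htinner] at hpos
      exact hpos
    have h0 : (0:ℝ) < inner ℝ (a j) x := convexHull_min hsubset (convex_halfSpace_gt hlin 0) hx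
    rw [hj] at h0
    exact lt_irrefl 0 h0
  | false =>
    rw [hε] at hAj
    simp only [Bool.false_eq_true, if_false] at hAj
    have hsubset : (↑(A.image p) : Set (EuclideanSpace ℝ (Fin (c + 1)))) ⊆
        {y | (inner ℝ (a j) y : ℝ) < 0} := by
      intro y hy
      obtain ⟨i, hi, rfl⟩ := Finset.mem_image.1 (by exact_mod_cast hy)
      have := hsub2 j (hAj hi)
      have hneg := (Finset.mem_filter.1 this).2
      rw [htinner] at hneg
      exact hneg
    have h0 : (inner ℝ (a j) x : ℝ) < 0 := convexHull_min hsubset (convex_halfSpace_lt hlin 0) hx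
    rw [hj] at h0
    exact lt_irrefl 0 h0
end

section
/- Let c ≥ 1, k ≥ 1, and m ≥ 1 be integers. Suppose that for any finite family G of polytopes in ℝ^c with χ(KG^{2^k}(G)) ≤ m there exist k affine hyperplanes in ℝ^c which pierce G. Then for any finite point sets X_1, …, X_m ⊂ ℝ^c there exist k affine hyperplanes H_1, …, H_k in ℝ^c such that for every choice of signs ε ∈ {+,−}^k the open orthant H_1^{ε_1} ∩ ⋯ ∩ H_k^{ε_k} contains at most |X_i|/2^k points of each X_i. -/
/-- **Affine hyperplane transversals imply equipartitions.** Suppose every finite family of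
polytopes in `ℝ^c` with `χ(KG^(2^k)) ≤ m` is pierced by `k` affine hyperplanes. Then any
`m` finite point sets in `ℝ^c` admit an equipartition by `k` affine hyperplanes: every open
orthant contains at most `|X i| / 2^k` points of each `X i`. -/
theorem transversal_to_equipartition (c k m : ℕ) (hc : 1 ≤ c) (hk : 1 ≤ k) (hm : 1 ≤ m)
    (hyp : ∀ G : Finset (Finset (EuclideanSpace ℝ (Fin c))),
      (∀ P ∈ G, P.Nonempty) →
      (∃ cc : Finset (EuclideanSpace ℝ (Fin c)) → Fin m, ∀ G' ⊆ G,
        (∀ P ∈ G', ∀ Q ∈ G', P ≠ Q →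
          Disjoint (convexHull ℝ (P : Set (EuclideanSpace ℝ (Fin c))))
            (convexHull ℝ (Q : Set (EuclideanSpace ℝ (Fin c))))) →
        (∀ P ∈ G', ∀ Q ∈ G', cc P = cc Q) → G'.card < 2 ^ k) →
      ∃ (a : Fin k → EuclideanSpace ℝ (Fin c)) (b : Fin k → ℝ),
        (∀ j, a j ≠ 0) ∧
        ∀ P ∈ G, ∃ x ∈ convexHull ℝ (P : Set (EuclideanSpace ℝ (Fin c))),
          ∃ j : Fin k, (inner ℝ (a j) x : ℝ) = b j)
    (X : Fin m → Finset (EuclideanSpace ℝ (Fin c))) :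
    ∃ (a : Fin k → EuclideanSpace ℝ (Fin c)) (b : Fin k → ℝ),
      (∀ j, a j ≠ 0) ∧
      ∀ (ε : Fin k → Bool) (i : Fin m),
        2 ^ k * {x : EuclideanSpace ℝ (Fin c) | x ∈ X i ∧
            ∀ j : Fin k, if ε j then (inner ℝ (a j) x : ℝ) > b j
              else (inner ℝ (a j) x : ℝ) < b j}.ncard ≤ (X i).card := by
  classical
  set t : Fin m → ℕ := fun i => (X i).card / 2 ^ k + 1 with ht
  set G : Finset (Finset (EuclideanSpace ℝ (Fin c))) :=
    Finset.univ.biUnion (fun i : Fin m => (X i).powersetCard (t i)) with hG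
  have hGmem : ∀ P ∈ G, ∃ i, P ⊆ X i ∧ P.card = t i := by
    intro P hP
    simp only [hG, Finset.mem_biUnion, Finset.mem_powersetCard, Finset.mem_univ,
      true_and] at hP
    exact hP
  have hne : ∀ P ∈ G, P.Nonempty := by
    intro P hP
    obtain ⟨i, _, hcard⟩ := hGmem P hP
    rw [← Finset.card_pos, hcard]
    exact Nat.succ_pos _
  set cc : Finset (EuclideanSpace ℝ (Fin c)) → Fin m := fun P =>
    if h : ∃ i, P ⊆ X i ∧ P.card = t i then h.choose else ⟨0, hm⟩ with hcc
  have hccspec : ∀ P ∈ G, P ⊆ X (cc P) ∧ P.card = t (cc P) := by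
    intro P hP
    have hex : ∃ i, P ⊆ X i ∧ P.card = t i := hGmem P hP
    simp only [hcc, dif_pos hex]
    exact hex.choose_spec
  have hcol : ∃ cc : Finset (EuclideanSpace ℝ (Fin c)) → Fin m, ∀ G' ⊆ G,
      (∀ P ∈ G', ∀ Q ∈ G', P ≠ Q →
        Disjoint (convexHull ℝ (P : Set (EuclideanSpace ℝ (Fin c))))
          (convexHull ℝ (Q : Set (EuclideanSpace ℝ (Fin c))))) →
      (∀ P ∈ G', ∀ Q ∈ G', cc P = cc Q) → G'.card < 2 ^ k := by
    refine ⟨cc, ?_⟩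
    intro G' hG'G hdisj hmono
    by_contra hcard
    push_neg at hcard
    have hG'ne : G'.Nonempty := by
      rw [← Finset.card_pos]
      have : (0:ℕ) < 2 ^ k := Nat.pow_pos (by norm_num)
      omega
    obtain ⟨P₀, hP₀⟩ := hG'ne
    set i := cc P₀ with hi
    have hall : ∀ P ∈ G', P ⊆ X i ∧ P.card = t i := by
      intro P hP
      have h1 : cc P = i := hmono P hP P₀ hP₀
      have h2 := hccspec P (hG'G hP)
      rw [h1] at h2
      exact h2
    have hpdisj : ∀ P ∈ G', ∀ Q ∈ G', P ≠ Q → Disjoint P Q := by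
      intro P hP Q hQ hne'
      have hd := hdisj P hP Q hQ hne'
      rw [Finset.disjoint_left]
      intro x hxP hxQ
      exact Set.disjoint_left.mp hd
        (subset_convexHull ℝ (P : Set (EuclideanSpace ℝ (Fin c))) hxP)
        (subset_convexHull ℝ (Q : Set (EuclideanSpace ℝ (Fin c))) hxQ)
    have hbu : (G'.biUnion id).card = G'.card * t i := by
      have hcb := Finset.card_biUnion (s := G') (t := id) hpdisj
      rw [hcb]
      calc ∑ u ∈ G', (id u).card = ∑ _u ∈ G', t i :=
            Finset.sum_congr rfl (fun P hP => (hall P hP).2)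
        _ = G'.card * t i := by simp [Finset.sum_const, mul_comm]
    have hsub : G'.biUnion id ⊆ X i := by
      intro x hx
      simp only [Finset.mem_biUnion, id] at hx
      obtain ⟨P, hP, hxP⟩ := hx
      exact (hall P hP).1 hxP
    have h1 : G'.card * t i ≤ (X i).card := by
      rw [← hbu]; exact Finset.card_le_card hsub
    have h2 : (X i).card < 2 ^ k * t i := by
      have := Nat.div_add_mod (X i).card (2 ^ k)
      have hpos : (0:ℕ) < 2 ^ k := Nat.pow_pos (by norm_num)
      have hmod : (X i).card % 2 ^ k < 2 ^ k := Nat.mod_lt _ hpos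
      simp only [ht]
      nlinarith [this, hmod]
    have h3 : 2 ^ k * t i ≤ G'.card * t i := Nat.mul_le_mul_right _ hcard
    omega
  obtain ⟨a, b, hab, hpierce⟩ := hyp G hne hcol
  refine ⟨a, b, hab, ?_⟩
  intro ε i
  set F : Finset (EuclideanSpace ℝ (Fin c)) :=
    (X i).filter (fun x => ∀ j : Fin k, if ε j then (inner ℝ (a j) x : ℝ) > b j
      else (inner ℝ (a j) x : ℝ) < b j) with hF
  have hset : {x : EuclideanSpace ℝ (Fin c) | x ∈ X i ∧
      ∀ j : Fin k, if ε j then (inner ℝ (a j) x : ℝ) > b j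
        else (inner ℝ (a j) x : ℝ) < b j} = (F : Set (EuclideanSpace ℝ (Fin c))) := by
    ext x
    simp [hF, Finset.mem_filter]
  rw [hset, Set.ncard_coe_finset]
  have hFcard : F.card ≤ (X i).card / 2 ^ k := by
    by_contra hbig
    push_neg at hbig
    have : t i ≤ F.card := hbig
    obtain ⟨S, hSF, hStcard⟩ := Finset.exists_subset_card_eq this
    have hSG : S ∈ G := by
      simp only [hG, Finset.mem_biUnion, Finset.mem_powersetCard, Finset.mem_univ,
        true_and]
      exact ⟨i, hSF.trans (Finset.filter_subset _ _), hStcard⟩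
    obtain ⟨x, hxhull, j, hj⟩ := hpierce S hSG
    -- convex hull of S is contained in the open orthant region for direction j
    have hlin : IsLinearMap ℝ (fun y : EuclideanSpace ℝ (Fin c) => (inner ℝ (a j) y : ℝ)) :=
      ⟨fun u v => inner_add_right _ _ _, fun r u => real_inner_smul_right _ _ _⟩
    have hconv : Convex ℝ {y : EuclideanSpace ℝ (Fin c) |
        if ε j then (inner ℝ (a j) y : ℝ) > b j else (inner ℝ (a j) y : ℝ) < b j} := by
      cases hεj : ε j with
      | true => simpa [hεj] using convex_halfSpace_gt hlin (b j)
      | false => simpa [hεj] using convex_halfSpace_lt hlin (b j)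
    have hSsub : (S : Set (EuclideanSpace ℝ (Fin c))) ⊆ {y : EuclideanSpace ℝ (Fin c) |
        if ε j then (inner ℝ (a j) y : ℝ) > b j else (inner ℝ (a j) y : ℝ) < b j} := by
      intro y hy
      have : y ∈ F := hSF hy
      simp only [hF, Finset.mem_filter] at this
      exact this.2 j
    have hxin := convexHull_min hSsub hconv hxhull
    simp only [Set.mem_setOf_eq] at hxin
    cases hεj : ε j with
    | true => simp only [hεj, if_true] at hxin; linarith
    | false => simp only [hεj, Bool.false_eq_true, if_false] at hxin; linarith
  calc 2 ^ k * F.card ≤ 2 ^ k * ((X i).card / 2 ^ k) := Nat.mul_le_mul_left _ hFcard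
    _ ≤ (X i).card := Nat.mul_div_le _ _
end
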